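/- arXiv:1511.03852 — 4 statements merged into one kernel-verified Lean document; each statement's English description precedes it below -/
import Mathlib

section
/- Let d ≥ 1 and let v₁, …, v_k ∈ ℤ^d be linearly independent over ℚ. Then for every w ∈ ℤ^d one has the inclusion–exclusion identity Σ_{S ⊆ {1,…,k}} (−1)^{|S|} · 𝟙[ w − Σ_{i∈S} vᵢ ∈ Cone(v) ∩ ℤ^d ] = 𝟙[ w ∈ P_τ ], where 𝟙[·] denotes the indicator (1 if the condition holds, 0 otherwise) and the sum is taken in ℤ. (This is the coefficient-wise form of the generating function identity (Σ_{u ∈ τ∩ℤ^d} χ^u) · ∏ᵢ (1 − χ^{vᵢ}) = Σ_{n ∈ P_τ} χ^n.) -/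
/-- `u ∈ ℤ^d` lies in the simplicial cone spanned by `v₁, …, v_k`, i.e.
`u = Σᵢ λᵢ vᵢ` with all `λᵢ ∈ ℚ`, `λᵢ ≥ 0`. -/
def coneMem (d k : ℕ) (v : Fin k → Fin d → ℤ) (u : Fin d → ℤ) : Prop :=
  ∃ lam : Fin k → ℚ, (∀ i, 0 ≤ lam i) ∧ ∀ j, (u j : ℚ) = ∑ i, lam i * (v i j : ℚ)

/-- `u ∈ ℤ^d` lies in the fundamental half-open parallelotope
`P_τ = {Σᵢ μᵢ vᵢ : 0 ≤ μᵢ < 1}`. -/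
def parMem (d k : ℕ) (v : Fin k → Fin d → ℤ) (u : Fin d → ℤ) : Prop :=
  ∃ mu : Fin k → ℚ, (∀ i, 0 ≤ mu i ∧ mu i < 1) ∧ ∀ j, (u j : ℚ) = ∑ i, mu i * (v i j : ℚ)

open scoped Classical

private lemma indicator_prod {k : ℕ} (P : Fin k → Prop) (hdec : Decidable (∀ i, P i)) :
    (@ite _ (∀ i, P i) hdec (1:ℤ) 0) = ∏ i, (if P i then (1:ℤ) else 0) := by
  by_cases h : ∀ i, P i
  · simp [h]
  · rw [if_neg h]
    push_neg at h
    obtain ⟨i, hi⟩ := h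
    exact (Finset.prod_eq_zero (Finset.mem_univ i) (by simp [hi])).symm

open scoped Classical in
theorem stmt1 (d k : ℕ) (hd : 1 ≤ d) (hk : k ≤ d)
    (v : Fin k → Fin d → ℤ)
    (hv : LinearIndependent ℚ (fun i : Fin k => fun j : Fin d => (v i j : ℚ))) :
    ∀ w : Fin d → ℤ,
      (∑ S : Finset (Fin k),
          (-1 : ℤ) ^ S.card * (if coneMem d k v (w - ∑ i ∈ S, v i) then 1 else 0))
        = (if parMem d k v w then 1 else 0) := by
  intro w
  have hchi : ∀ (S : Finset (Fin k)) (j : Fin d),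
      ∑ i, (if i ∈ S then (1:ℚ) else 0) * (v i j : ℚ) = ∑ i ∈ S, (v i j : ℚ) := by
    intro S j
    rw [Finset.sum_congr rfl (fun i _ => ite_mul (i ∈ S) (1:ℚ) 0 (v i j : ℚ))]
    simp
  have hsub : ∀ (S : Finset (Fin k)) (j : Fin d),
      (((w - ∑ i ∈ S, v i) j : ℤ) : ℚ) = (w j : ℚ) - ∑ i ∈ S, (v i j : ℚ) := by
    intro S j
    have : (w - ∑ i ∈ S, v i) j = w j - ∑ i ∈ S, v i j := by
      simp [Finset.sum_apply]
    rw [this]; push_cast; ring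
  by_cases hspan : ∃ c : Fin k → ℚ, ∀ j, (w j : ℚ) = ∑ i, c i * (v i j : ℚ)
  · obtain ⟨c, hc⟩ := hspan
    have huniq : ∀ lam mu : Fin k → ℚ,
        (∀ j, ∑ i, lam i * (v i j : ℚ) = ∑ i, mu i * (v i j : ℚ)) → lam = mu := by
      intro lam mu h
      have h0 : ∑ i, (lam i - mu i) • (fun j : Fin d => (v i j : ℚ)) = 0 := by
        funext j
        have := h j
        simp only [Finset.sum_apply, Pi.zero_apply, Pi.smul_apply, smul_eq_mul, sub_mul]
        rw [Finset.sum_sub_distrib]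
        linarith
      have h1 := Fintype.linearIndependent_iff.mp hv (fun i => lam i - mu i) h0
      funext i
      have h2 : lam i - mu i = 0 := h1 i
      linarith
    have hkey : ∀ (S : Finset (Fin k)) (j : Fin d),
        (((w - ∑ i ∈ S, v i) j : ℤ) : ℚ)
          = ∑ i, (c i - (if i ∈ S then 1 else 0)) * (v i j : ℚ) := by
      intro S j
      rw [hsub S j, hc j]
      rw [Finset.sum_congr rfl (fun i _ => sub_mul (c i) _ ((v i j : ℚ)))]
      rw [Finset.sum_sub_distrib, hchi S j]
    have hconeS : ∀ S : Finset (Fin k),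
        coneMem d k v (w - ∑ i ∈ S, v i)
          ↔ ∀ i, 0 ≤ c i - (if i ∈ S then 1 else 0) := by
      intro S
      constructor
      · rintro ⟨lam, hpos, hlam⟩
        have heq : lam = fun i => c i - (if i ∈ S then 1 else 0) := by
          apply huniq
          intro j
          rw [← hlam j, hkey S j]
        intro i
        rw [← congrFun heq i]
        exact hpos i
      · intro h
        exact ⟨fun i => c i - (if i ∈ S then 1 else 0), h, fun j => hkey S j⟩
    have hparW : parMem d k v w ↔ ∀ i, 0 ≤ c i ∧ c i < 1 := by
      constructor
      · rintro ⟨mu, hmu, hmuw⟩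
        have heq : mu = c := huniq _ _ (fun j => by rw [← hmuw j, ← hc j])
        intro i; rw [← heq]; exact hmu i
      · intro h
        exact ⟨c, h, hc⟩
    set a : Fin k → ℤ := fun i => if (0:ℚ) ≤ c i then 1 else 0 with ha
    set b : Fin k → ℤ := fun i => if (1:ℚ) ≤ c i then 1 else 0 with hb
    have hterm : ∀ S : Finset (Fin k),
        (-1 : ℤ) ^ S.card * (if coneMem d k v (w - ∑ i ∈ S, v i) then 1 else 0)
          = (∏ i ∈ S, (-b i)) * ∏ i ∈ Sᶜ, a i := by
      intro S
      have hind : (if coneMem d k v (w - ∑ i ∈ S, v i) then (1:ℤ) else 0)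
          = (∏ i ∈ S, b i) * ∏ i ∈ Sᶜ, a i := by
        by_cases h : coneMem d k v (w - ∑ i ∈ S, v i)
        · rw [if_pos h]
          have h' := (hconeS S).mp h
          have hb1 : ∏ i ∈ S, b i = 1 := Finset.prod_eq_one fun i hi => by
            have := h' i
            rw [if_pos hi] at this
            simp [hb, show (1:ℚ) ≤ c i by linarith]
          have ha1 : ∏ i ∈ Sᶜ, a i = 1 := Finset.prod_eq_one fun i hi => by
            have := h' i
            rw [if_neg (Finset.mem_compl.mp hi)] at this
            simp [ha, show (0:ℚ) ≤ c i by linarith]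
          rw [hb1, ha1]; ring
        · rw [if_neg h]
          have h' : ¬ ∀ i, 0 ≤ c i - (if i ∈ S then 1 else 0) :=
            fun hh => h ((hconeS S).mpr hh)
          push_neg at h'
          obtain ⟨i, hi⟩ := h'
          by_cases hiS : i ∈ S
          · rw [if_pos hiS] at hi
            have hb0 : ∏ j ∈ S, b j = 0 :=
              Finset.prod_eq_zero hiS (by simp [hb]; linarith)
            rw [hb0]; ring
          · rw [if_neg hiS] at hi
            have ha0 : ∏ j ∈ Sᶜ, a j = 0 :=
              Finset.prod_eq_zero (Finset.mem_compl.mpr hiS)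
                (by simp [ha]; linarith)
            rw [ha0]; ring
      rw [hind]
      have e3 : ∏ i ∈ S, (-b i) = (-1 : ℤ) ^ S.card * ∏ i ∈ S, b i := by
        rw [Finset.prod_congr rfl (fun i _ => (neg_one_mul (b i)).symm),
          Finset.prod_mul_distrib, Finset.prod_const]
      rw [e3]; ring
    rw [Finset.sum_congr rfl (fun S _ => hterm S)]
    have hpa := Finset.prod_add (fun i => -b i) a (Finset.univ : Finset (Fin k))
    rw [Finset.powerset_univ] at hpa
    have hsd : ∀ S : Finset (Fin k), Finset.univ \ S = Sᶜ := fun S => by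
      rw [Finset.compl_eq_univ_sdiff]
    simp only [hsd] at hpa
    rw [← hpa]
    have hindp : (if parMem d k v w then (1:ℤ) else 0) = ∏ i, (-b i + a i) := by
      by_cases h : parMem d k v w
      · rw [if_pos h]
        have h' := hparW.mp h
        exact (Finset.prod_eq_one fun i _ => by
          obtain ⟨h1, h2⟩ := h' i
          simp [ha, hb, h1, show ¬ (1:ℚ) ≤ c i by linarith]).symm
      · rw [if_neg h]
        have h' : ¬ ∀ i, 0 ≤ c i ∧ c i < 1 := fun hh => h (hparW.mpr hh)
        push_neg at h'
        obtain ⟨i, hi⟩ := h'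
        refine (Finset.prod_eq_zero (Finset.mem_univ i) ?_).symm
        by_cases h1 : (0:ℚ) ≤ c i
        · have h2 : (1:ℚ) ≤ c i := by
            by_contra hcon; exact absurd (hi h1) (by simp; linarith)
          simp [ha, hb, h1, h2]
        · simp [ha, hb, h1, show ¬ (1:ℚ) ≤ c i by intro hh; exact h1 (by linarith)]
    rw [hindp]
  · have hcone : ∀ S : Finset (Fin k), ¬ coneMem d k v (w - ∑ i ∈ S, v i) := by
      rintro S ⟨lam, _, hlam⟩
      apply hspan
      refine ⟨fun i => lam i + (if i ∈ S then 1 else 0), fun j => ?_⟩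
      have h1 := hlam j
      rw [hsub S j] at h1
      rw [Finset.sum_congr rfl (fun i _ => add_mul (lam i) _ ((v i j : ℚ)))]
      rw [Finset.sum_add_distrib, hchi S j]
      linarith
    have hpar : ¬ parMem d k v w := by
      rintro ⟨mu, _, hmu⟩
      exact hspan ⟨mu, hmu⟩
    simp [hcone, hpar]
end

section
/- Let d ≥ 1, let v₁, …, v_k ∈ ℤ^d be linearly independent over ℚ, and let φ : ℤ^d → ℤ be a group homomorphism with φ(vᵢ) > 0 for every i. For each n ∈ ℕ the set {u ∈ Cone(v) ∩ ℤ^d : φ(u) = n} is finite; let c_n denote its cardinality. Then in the ring ℤ[[t]] of formal power series one has (Σ_{n ∈ ℕ} c_n tⁿ) · ∏_{i=1}^{k} (1 − t^{φ(vᵢ)}) = Σ_{p ∈ P_τ} t^{φ(p)}, where the right-hand side is a finite sum over the finitely many lattice points of P_τ and each exponent φ(p) is a natural number. -/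
open Finset PowerSeries

noncomputable def geomSer (a : ℕ) : PowerSeries ℤ :=
  PowerSeries.mk fun n => if a ∣ n then 1 else 0

lemma geom_mul (a : ℕ) (ha : 1 ≤ a) :
    ((1 : PowerSeries ℤ) - X ^ a) * geomSer a = 1 := by
  ext n
  rw [sub_mul, one_mul, map_sub, PowerSeries.coeff_one, geomSer,
    PowerSeries.coeff_X_pow_mul', PowerSeries.coeff_mk]
  rcases Nat.eq_zero_or_pos n with rfl | hn
  · have : ¬ a ≤ 0 := by omega
    simp [this]
  · have hne : n ≠ 0 := hn.ne'
    by_cases hle : a ≤ n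
    · rw [if_pos hle, PowerSeries.coeff_mk, if_neg hne]
      have hiff : a ∣ n ↔ a ∣ n - a := by
        constructor
        · intro h; exact Nat.dvd_sub h dvd_rfl
        · intro h
          have := Nat.dvd_add h (dvd_refl a)
          rwa [Nat.sub_add_cancel hle] at this
      by_cases hd : a ∣ n
      · rw [if_pos hd, if_pos (hiff.mp hd), sub_self]
      · rw [if_neg hd, if_neg (fun hh => hd (hiff.mpr hh)), sub_zero]
    · rw [if_neg hle, if_neg hne, sub_zero, if_neg]
      intro hd; exact hle (Nat.le_of_dvd hn hd)

lemma phi_sum (d : ℕ) (φ : (Fin d → ℤ) →+ ℤ) (u : Fin d → ℤ) :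
    φ u = ∑ j, u j * φ (Pi.single j 1) := by
  conv_lhs => rw [← Finset.univ_sum_single u]
  rw [map_sum]
  refine Finset.sum_congr rfl fun j _ => ?_
  have h : Pi.single j (u j) = u j • (Pi.single j (1 : ℤ) : Fin d → ℤ) := by
    ext j'
    by_cases hj : j' = j
    · subst hj; simp
    · simp [Pi.single_eq_of_ne hj]
  rw [h, map_zsmul, smul_eq_mul]

lemma phi_rat (d k : ℕ) (v : Fin k → Fin d → ℤ) (φ : (Fin d → ℤ) →+ ℤ)
    (lam : Fin k → ℚ) (u : Fin d → ℤ)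
    (hu : ∀ j, (u j : ℚ) = ∑ i, lam i * (v i j : ℚ)) :
    (φ u : ℚ) = ∑ i, lam i * (φ (v i) : ℚ) := by
  have hvals : ∀ i : Fin k, ((φ (v i) : ℤ) : ℚ) = ∑ j, (v i j : ℚ) * (φ (Pi.single j 1) : ℚ) := by
    intro i; rw [phi_sum d φ (v i)]; push_cast; ring_nf
  rw [phi_sum d φ u]
  push_cast
  calc ∑ j, (u j : ℚ) * (φ (Pi.single j 1) : ℚ)
      = ∑ j, (∑ i, lam i * (v i j : ℚ)) * (φ (Pi.single j 1) : ℚ) := by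
        exact Finset.sum_congr rfl fun j _ => by rw [hu j]
    _ = ∑ i, ∑ j, lam i * ((v i j : ℚ) * (φ (Pi.single j 1) : ℚ)) := by
        rw [Finset.sum_comm]
        exact Finset.sum_congr rfl fun j _ => by rw [Finset.sum_mul]; exact Finset.sum_congr rfl fun i _ => by ring
    _ = ∑ i, lam i * (φ (v i) : ℚ) := by
        refine Finset.sum_congr rfl fun i _ => ?_
        rw [← Finset.mul_sum, ← hvals i]

lemma coords_unique (d k : ℕ) (v : Fin k → Fin d → ℤ)
    (hv : LinearIndependent ℚ (fun i : Fin k => fun j : Fin d => (v i j : ℚ)))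
    (c c' : Fin k → ℚ)
    (h : ∀ j, ∑ i, c i * (v i j : ℚ) = ∑ i, c' i * (v i j : ℚ)) : c = c' := by
  have h0 : ∑ i, (c i - c' i) • (fun j : Fin d => (v i j : ℚ)) = 0 := by
    funext j
    have := h j
    simp only [Finset.sum_apply, Pi.smul_apply, smul_eq_mul, Pi.zero_apply, sub_mul]
    rw [Finset.sum_sub_distrib]
    linarith
  have := Fintype.linearIndependent_iff.mp hv (fun i => c i - c' i) h0
  funext i
  have hi := this i
  linarith

lemma finite_of_bounded (d : ℕ) (S : Set (Fin d → ℤ)) (B : Fin d → ℤ)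
    (h : ∀ u ∈ S, ∀ j, |u j| ≤ B j) : S.Finite := by
  apply Set.Finite.subset (Set.finite_Icc (fun j => -B j) B)
  intro u hu
  constructor
  · intro j; have := h u hu j; rw [abs_le] at this; simp only; linarith [this.1]
  · intro j; have := h u hu j; rw [abs_le] at this; exact this.2

lemma par_finite (d k : ℕ) (v : Fin k → Fin d → ℤ) :
    {u : Fin d → ℤ | parMem d k v u}.Finite := by
  apply finite_of_bounded d _ (fun j => ∑ i, |v i j|)
  rintro u ⟨mu, hmu, hcoord⟩ j
  have hq : |(u j : ℚ)| ≤ ∑ i, |(v i j : ℚ)| := by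
    rw [hcoord j]
    calc |∑ i, mu i * (v i j : ℚ)| ≤ ∑ i, |mu i * (v i j : ℚ)| := Finset.abs_sum_le_sum_abs _ _
      _ ≤ ∑ i, |(v i j : ℚ)| := by
          refine Finset.sum_le_sum fun i _ => ?_
          rw [abs_mul]
          have h1 : |mu i| ≤ 1 := by
            rw [abs_le]; constructor <;> linarith [(hmu i).1, (hmu i).2]
          calc |mu i| * |(v i j : ℚ)| ≤ 1 * |(v i j : ℚ)| :=
                mul_le_mul_of_nonneg_right h1 (abs_nonneg _)
            _ = |(v i j : ℚ)| := one_mul _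
  have : ((|u j| : ℤ) : ℚ) ≤ ((∑ i, |v i j| : ℤ) : ℚ) := by push_cast; exact hq
  exact_mod_cast this

lemma cone_slice_finite (d k : ℕ) (v : Fin k → Fin d → ℤ) (φ : (Fin d → ℤ) →+ ℤ)
    (hφ : ∀ i, 0 < φ (v i)) (n : ℕ) :
    {u : Fin d → ℤ | coneMem d k v u ∧ φ u = (n : ℤ)}.Finite := by
  apply finite_of_bounded d _ (fun j => (n : ℤ) * ∑ i, |v i j|)
  rintro u ⟨⟨lam, hlam0, hcoord⟩, hφu⟩ j
  have hsum : (n : ℚ) = ∑ i, lam i * (φ (v i) : ℚ) := by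
    have := phi_rat d k v φ lam u hcoord
    rw [hφu] at this; exact_mod_cast this
  have hlamn : ∀ i, lam i ≤ (n : ℚ) := by
    intro i
    have h1 : (1 : ℚ) ≤ (φ (v i) : ℚ) := by exact_mod_cast hφ i
    have hterm : ∀ i', 0 ≤ lam i' * (φ (v i') : ℚ) := fun i' => by
      have : (0:ℚ) ≤ (φ (v i') : ℚ) := by exact_mod_cast (hφ i').le
      exact mul_nonneg (hlam0 i') this
    have := Finset.single_le_sum (f := fun i' => lam i' * (φ (v i') : ℚ))
      (fun i' _ => hterm i') (Finset.mem_univ i)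
    nlinarith [hlam0 i]
  have hq : |(u j : ℚ)| ≤ (n : ℚ) * ∑ i, |(v i j : ℚ)| := by
    rw [hcoord j]
    calc |∑ i, lam i * (v i j : ℚ)| ≤ ∑ i, |lam i * (v i j : ℚ)| := Finset.abs_sum_le_sum_abs _ _
      _ ≤ ∑ i, (n : ℚ) * |(v i j : ℚ)| := by
          refine Finset.sum_le_sum fun i _ => ?_
          rw [abs_mul, abs_of_nonneg (hlam0 i)]
          exact mul_le_mul_of_nonneg_right (hlamn i) (abs_nonneg _)
      _ = (n : ℚ) * ∑ i, |(v i j : ℚ)| := by rw [Finset.mul_sum]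
  have : ((|u j| : ℤ) : ℚ) ≤ (((n : ℤ) * ∑ i, |v i j| : ℤ) : ℚ) := by push_cast; exact hq
  exact_mod_cast this

def Phi (d k : ℕ) (v : Fin k → Fin d → ℤ) (p : Fin d → ℤ) (m : Fin k → ℕ) : Fin d → ℤ :=
  p + ∑ i, (m i : ℤ) • v i

lemma Phi_apply (d k : ℕ) (v : Fin k → Fin d → ℤ) (p : Fin d → ℤ) (m : Fin k → ℕ) (j : Fin d) :
    Phi d k v p m j = p j + ∑ i, (m i : ℤ) * v i j := by
  simp [Phi]

lemma phi_Phi (d k : ℕ) (v : Fin k → Fin d → ℤ) (φ : (Fin d → ℤ) →+ ℤ)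
    (p : Fin d → ℤ) (m : Fin k → ℕ) :
    φ (Phi d k v p m) = φ p + ∑ i, (m i : ℤ) * φ (v i) := by
  rw [Phi, map_add, map_sum]
  congr 1
  exact Finset.sum_congr rfl fun i _ => by rw [map_zsmul, smul_eq_mul]

lemma Phi_coord (d k : ℕ) (v : Fin k → Fin d → ℤ) (p : Fin d → ℤ) (m : Fin k → ℕ)
    (mu : Fin k → ℚ) (hcoord : ∀ j, (p j : ℚ) = ∑ i, mu i * (v i j : ℚ)) (j : Fin d) :
    ((Phi d k v p m j : ℤ) : ℚ) = ∑ i, (mu i + (m i : ℚ)) * (v i j : ℚ) := by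
  rw [Phi_apply]
  push_cast
  rw [hcoord j, ← Finset.sum_add_distrib]
  exact Finset.sum_congr rfl fun i _ => by ring

lemma Phi_inj (d k : ℕ) (v : Fin k → Fin d → ℤ)
    (hv : LinearIndependent ℚ (fun i : Fin k => fun j : Fin d => (v i j : ℚ)))
    (p p' : Fin d → ℤ) (m m' : Fin k → ℕ)
    (hp : parMem d k v p) (hp' : parMem d k v p')
    (h : Phi d k v p m = Phi d k v p' m') : p = p' ∧ m = m' := by
  obtain ⟨mu, hmu, hc⟩ := hp
  obtain ⟨mu', hmu', hc'⟩ := hp'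
  have hcoe : (fun i => mu i + (m i : ℚ)) = (fun i => mu' i + (m' i : ℚ)) := by
    apply coords_unique d k v hv
    intro j
    rw [← Phi_coord d k v p m mu hc j, ← Phi_coord d k v p' m' mu' hc' j, h]
  have hm : m = m' := by
    funext i
    have he : mu i + (m i : ℚ) = mu' i + (m' i : ℚ) := congrFun hcoe i
    have h1 : (⌊mu i + (m i : ℚ)⌋ : ℤ) = (m i : ℤ) := by
      rw [Int.floor_add_natCast, Int.floor_eq_zero_iff.mpr ⟨(hmu i).1, (hmu i).2⟩, zero_add]
    have h2 : (⌊mu' i + (m' i : ℚ)⌋ : ℤ) = (m' i : ℤ) := by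
      rw [Int.floor_add_natCast, Int.floor_eq_zero_iff.mpr ⟨(hmu' i).1, (hmu' i).2⟩, zero_add]
    have : (m i : ℤ) = (m' i : ℤ) := by rw [← h1, ← h2, he]
    exact_mod_cast this
  subst hm
  refine ⟨?_, rfl⟩
  have hmu_eq : mu = mu' := by
    funext i
    have he : mu i + (m i : ℚ) = mu' i + (m i : ℚ) := congrFun hcoe i
    linarith
  funext j
  have : (p j : ℚ) = (p' j : ℚ) := by rw [hc j, hc' j, hmu_eq]
  exact_mod_cast this

lemma par_phi_nonneg (d k : ℕ) (v : Fin k → Fin d → ℤ) (φ : (Fin d → ℤ) →+ ℤ)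
    (hφ : ∀ i, 0 < φ (v i)) (p : Fin d → ℤ) (hp : parMem d k v p) : 0 ≤ φ p := by
  obtain ⟨mu, hmu, hc⟩ := hp
  have := phi_rat d k v φ mu p hc
  have hnn : (0:ℚ) ≤ ∑ i, mu i * (φ (v i) : ℚ) := by
    refine Finset.sum_nonneg fun i _ => mul_nonneg (hmu i).1 (by exact_mod_cast (hφ i).le)
  have : (0:ℚ) ≤ (φ p : ℚ) := by rw [this]; exact hnn
  exact_mod_cast this

lemma Phi_cone (d k : ℕ) (v : Fin k → Fin d → ℤ) (p : Fin d → ℤ) (m : Fin k → ℕ)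
    (hp : parMem d k v p) : coneMem d k v (Phi d k v p m) := by
  obtain ⟨mu, hmu, hc⟩ := hp
  exact ⟨fun i => mu i + (m i : ℚ),
    fun i => add_nonneg (hmu i).1 (Nat.cast_nonneg _),
    fun j => Phi_coord d k v p m mu hc j⟩

lemma cone_decomp (d k : ℕ) (v : Fin k → Fin d → ℤ) (u : Fin d → ℤ)
    (hu : coneMem d k v u) : ∃ p m, parMem d k v p ∧ Phi d k v p m = u := by
  obtain ⟨lam, hlam0, hc⟩ := hu
  refine ⟨u - ∑ i, ((⌊lam i⌋).toNat : ℤ) • v i, fun i => (⌊lam i⌋).toNat, ?_, ?_⟩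
  · refine ⟨fun i => Int.fract (lam i), fun i => ⟨Int.fract_nonneg _, Int.fract_lt_one _⟩, ?_⟩
    intro j
    have hfl : ∀ i, ((⌊lam i⌋).toNat : ℚ) = (⌊lam i⌋ : ℚ) := by
      intro i
      have : (0:ℤ) ≤ ⌊lam i⌋ := Int.floor_nonneg.mpr (hlam0 i)
      exact_mod_cast Int.toNat_of_nonneg this
    have hz : (u - ∑ i, ((⌊lam i⌋).toNat : ℤ) • v i) j
        = u j - ∑ i, ((⌊lam i⌋).toNat : ℤ) * v i j := by
      simp [Finset.sum_apply]
    have : ((u - ∑ i, ((⌊lam i⌋).toNat : ℤ) • v i) j : ℚ)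
        = (u j : ℚ) - ∑ i, (⌊lam i⌋ : ℚ) * (v i j : ℚ) := by
      rw [hz]
      push_cast
      refine congrArg _ (Finset.sum_congr rfl fun i _ => ?_)
      congr 1
      exact_mod_cast hfl i
    rw [this, hc j, ← Finset.sum_sub_distrib]
    refine Finset.sum_congr rfl fun i _ => ?_
    show lam i * (v i j : ℚ) - (⌊lam i⌋ : ℚ) * (v i j : ℚ) = Int.fract (lam i) * (v i j : ℚ)
    rw [← Int.self_sub_floor]
    ring
  · funext j
    rw [Phi_apply]
    simp [Pi.sub_apply, Finset.sum_apply]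

lemma coeff_geom_prod (k : ℕ) (a : Fin k → ℕ) (ha : ∀ i, 1 ≤ a i) (n : ℕ) :
    PowerSeries.coeff n (∏ i, geomSer (a i)) =
      (((Fintype.piFinset fun _ : Fin k => Finset.range (n+1)).filter
        (fun m => ∑ i, m i * a i = n)).card : ℤ) := by
  classical
  rw [PowerSeries.coeff_prod]
  simp only [geomSer, PowerSeries.coeff_mk]
  have h1 : ∀ l : Fin k →₀ ℕ, (∏ i, if a i ∣ l i then (1:ℤ) else 0)
      = if ∀ i ∈ Finset.univ, a i ∣ l i then (1:ℤ) else 0 := fun l => by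
        rw [Finset.prod_boole]; simp
  rw [Finset.sum_congr rfl fun l _ => h1 l, Finset.sum_boole]
  congr 1
  refine Finset.card_bij' (fun l _ => fun x => l x / a x)
    (fun m _ => Finsupp.equivFunOnFinite.symm (fun x => m x * a x)) ?_ ?_ ?_ ?_
  · intro l hl
    simp only [Finset.mem_filter, Finset.mem_finsuppAntidiag] at hl
    obtain ⟨⟨hsum, -⟩, hdvd⟩ := hl
    simp only [Finset.mem_filter, Fintype.mem_piFinset, Finset.mem_range]
    constructor
    · intro x
      have hle : l x ≤ n := hsum ▸ Finset.single_le_sum (fun _ _ => Nat.zero_le _) (Finset.mem_univ x)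
      exact Nat.lt_succ_of_le (le_trans (Nat.div_le_self _ _) hle)
    · calc ∑ i, l i / a i * a i = ∑ i, l i :=
            Finset.sum_congr rfl fun i _ => Nat.div_mul_cancel (hdvd i (Finset.mem_univ i))
        _ = n := hsum
  · intro m hm
    simp only [Finset.mem_filter, Fintype.mem_piFinset, Finset.mem_range] at hm
    simp only [Finset.mem_filter, Finset.mem_finsuppAntidiag]
    refine ⟨⟨?_, Finset.subset_univ _⟩, ?_⟩
    · simpa using hm.2
    · intro i _
      simp only [Finsupp.coe_equivFunOnFinite_symm, Pi.mul_apply]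
      exact dvd_mul_left _ _
  · intro l hl
    simp only [Finset.mem_filter, Finset.mem_finsuppAntidiag] at hl
    ext i
    simp only [Finsupp.coe_equivFunOnFinite_symm, Pi.mul_apply]
    exact Nat.div_mul_cancel (hl.2 i (Finset.mem_univ i))
  · intro m hm
    funext i
    simp only [Finsupp.coe_equivFunOnFinite_symm, Pi.mul_apply]
    rw [Nat.mul_div_cancel _ (by have := ha i; omega : 0 < a i)]

lemma slice_count (d k : ℕ) (v : Fin k → Fin d → ℤ)
    (hv : LinearIndependent ℚ (fun i : Fin k => fun j : Fin d => (v i j : ℚ)))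
    (φ : (Fin d → ℤ) →+ ℤ) (hφ : ∀ i, 0 < φ (v i)) (n : ℕ) :
    ({u : Fin d → ℤ | coneMem d k v u ∧ φ u = (n : ℤ)}.ncard : ℤ)
    = ∑ p ∈ (par_finite d k v).toFinset,
        (if (φ p).toNat ≤ n then
          ((((Fintype.piFinset fun _ : Fin k => Finset.range (n - (φ p).toNat + 1)).filter
            (fun m => ∑ i, m i * (φ (v i)).toNat = n - (φ p).toNat)).card : ℤ))
        else 0) := by
  classical
  set Pf := (par_finite d k v).toFinset with hPf
  set Mn : (Fin d → ℤ) → Finset (Fin k → ℕ) := fun p =>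
    (Fintype.piFinset fun _ : Fin k => Finset.range (n+1)).filter
      (fun m => φ p + ∑ i, (m i : ℤ) * φ (v i) = (n : ℤ)) with hMn
  have hparPf : ∀ p, p ∈ Pf ↔ parMem d k v p := fun p => by
    rw [hPf, Set.Finite.mem_toFinset]; rfl
  -- the slice as a biUnion
  have hset : (cone_slice_finite d k v φ hφ n).toFinset
      = Pf.biUnion (fun p => (Mn p).image (Phi d k v p)) := by
    ext u
    rw [Set.Finite.mem_toFinset, Finset.mem_biUnion]
    constructor
    · rintro ⟨hc, hn⟩
      obtain ⟨p, m, hp, hPhi⟩ := cone_decomp d k v u hc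
      refine ⟨p, (hparPf p).mpr hp, Finset.mem_image.mpr ⟨m, ?_, hPhi⟩⟩
      have hφu : φ p + ∑ i, (m i : ℤ) * φ (v i) = (n : ℤ) := by
        rw [← phi_Phi d k v φ p m, hPhi, hn]
      rw [hMn]
      simp only [Finset.mem_filter, Fintype.mem_piFinset, Finset.mem_range]
      refine ⟨fun i => ?_, hφu⟩
      have h0 : 0 ≤ φ p := par_phi_nonneg d k v φ hφ p hp
      have hterm : ∀ i', (0:ℤ) ≤ (m i' : ℤ) * φ (v i') :=
        fun i' => mul_nonneg (Int.natCast_nonneg _) (hφ i').le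
      have h1 : (m i : ℤ) ≤ (m i : ℤ) * φ (v i) :=
        le_mul_of_one_le_right (Int.natCast_nonneg _) (hφ i)
      have h2 : (m i : ℤ) * φ (v i) ≤ ∑ i', (m i' : ℤ) * φ (v i') :=
        Finset.single_le_sum (fun i' _ => hterm i') (Finset.mem_univ i)
      have : (m i : ℤ) ≤ (n : ℤ) := by omega
      omega
    · rintro ⟨p, hp, hu⟩
      rw [Finset.mem_image] at hu
      obtain ⟨m, hm, rfl⟩ := hu
      rw [hMn] at hm
      simp only [Finset.mem_filter, Fintype.mem_piFinset, Finset.mem_range] at hm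
      refine ⟨Phi_cone d k v p m ((hparPf p).mp hp), ?_⟩
      rw [phi_Phi d k v φ p m, hm.2]
  -- convert ncard
  rw [Set.ncard_eq_toFinset_card _ (cone_slice_finite d k v φ hφ n), hset]
  rw [Finset.card_biUnion]
  swap
  · intro p hp p' hp' hne
    rw [Function.onFun, Finset.disjoint_left]
    rintro x hx hx'
    obtain ⟨m, hm, hxm⟩ := Finset.mem_image.mp hx
    obtain ⟨m', hm', hxm'⟩ := Finset.mem_image.mp hx'
    exact hne (Phi_inj d k v hv p p' m m' ((hparPf p).mp hp) ((hparPf p').mp hp')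
      (hxm.trans hxm'.symm)).1
  push_cast
  refine Finset.sum_congr rfl fun p hp => ?_
  have hpar := (hparPf p).mp hp
  have h0 : 0 ≤ φ p := par_phi_nonneg d k v φ hφ p hpar
  have hb : ((φ p).toNat : ℤ) = φ p := Int.toNat_of_nonneg h0
  rw [Finset.card_image_of_injOn (fun m hm m' hm' h =>
    (Phi_inj d k v hv p p m m' hpar hpar h).2)]
  by_cases hle : (φ p).toNat ≤ n
  · rw [if_pos hle]
    norm_cast
    refine Finset.card_bij' (fun m _ => m) (fun m _ => m) ?_ ?_ (fun _ _ => rfl) (fun _ _ => rfl)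
    · intro m hm
      rw [hMn] at hm
      simp only [Finset.mem_filter, Fintype.mem_piFinset, Finset.mem_range] at hm ⊢
      obtain ⟨hrange, heq⟩ := hm
      have hZsum : (∑ i, (m i : ℤ) * φ (v i)) = ((∑ i, m i * (φ (v i)).toNat : ℕ) : ℤ) := by
        push_cast
        refine Finset.sum_congr rfl fun i _ => ?_
        rw [Int.toNat_of_nonneg (hφ i).le]
      have heqN : (φ p).toNat + ∑ i, m i * (φ (v i)).toNat = n := by
        rw [← hb, hZsum] at heq
        exact_mod_cast heq
      have hsum : ∑ i, m i * (φ (v i)).toNat = n - (φ p).toNat := by omega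
      refine ⟨fun i => ?_, hsum⟩
      have h1 : m i ≤ m i * (φ (v i)).toNat := by
        have : 1 ≤ (φ (v i)).toNat := by
          have := hφ i; omega
        exact Nat.le_mul_of_pos_right _ (by omega)
      have h2 : m i * (φ (v i)).toNat ≤ ∑ i', m i' * (φ (v i')).toNat :=
        Finset.single_le_sum (f := fun i' => m i' * (φ (v i')).toNat)
          (fun i' _ => Nat.zero_le _) (Finset.mem_univ i)
      omega
    · intro m hm
      simp only [Finset.mem_filter, Fintype.mem_piFinset, Finset.mem_range] at hm
      rw [hMn]
      simp only [Finset.mem_filter, Fintype.mem_piFinset, Finset.mem_range]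
      obtain ⟨hrange, heq⟩ := hm
      constructor
      · intro i; have := hrange i; omega
      · have hZsum : (∑ i, (m i : ℤ) * φ (v i)) = ((∑ i, m i * (φ (v i)).toNat : ℕ) : ℤ) := by
          push_cast
          refine Finset.sum_congr rfl fun i _ => ?_
          rw [Int.toNat_of_nonneg (hφ i).le]
        have heqN : (φ p).toNat + ∑ i, m i * (φ (v i)).toNat = n := by omega
        rw [← hb, hZsum]
        exact_mod_cast congrArg (Nat.cast : ℕ → ℤ) heqN
  · rw [if_neg hle]
    norm_cast
    rw [Finset.card_eq_zero, Finset.eq_empty_iff_forall_notMem]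
    intro m hm
    rw [hMn] at hm
    simp only [Finset.mem_filter, Fintype.mem_piFinset, Finset.mem_range] at hm
    have hterm : (0:ℤ) ≤ ∑ i, (m i : ℤ) * φ (v i) :=
      Finset.sum_nonneg fun i _ => mul_nonneg (Int.natCast_nonneg _) (hφ i).le
    have : φ p ≤ (n : ℤ) := by omega
    omega


lemma main_identity (d k : ℕ) (v : Fin k → Fin d → ℤ)
    (hv : LinearIndependent ℚ (fun i : Fin k => fun j : Fin d => (v i j : ℚ)))
    (φ : (Fin d → ℤ) →+ ℤ) (hφ : ∀ i, 0 < φ (v i)) :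
    (PowerSeries.mk fun n : ℕ =>
        (({u : Fin d → ℤ | coneMem d k v u ∧ φ u = (n : ℤ)}.ncard : ℤ)))
    = (∑ p ∈ (par_finite d k v).toFinset, (PowerSeries.X : PowerSeries ℤ) ^ (φ p).toNat)
      * ∏ i, geomSer ((φ (v i)).toNat) := by
  ext n
  rw [PowerSeries.coeff_mk, slice_count d k v hv φ hφ n, Finset.sum_mul, map_sum]
  refine Finset.sum_congr rfl fun p hp => ?_
  rw [PowerSeries.coeff_X_pow_mul']
  by_cases hle : (φ p).toNat ≤ n
  · rw [if_pos hle, if_pos hle,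
      coeff_geom_prod k _ (fun i => by have := hφ i; omega) (n - (φ p).toNat)]
  · rw [if_neg hle, if_neg hle]

theorem stmt2 (d k : ℕ) (hd : 1 ≤ d) (hk : k ≤ d)
    (v : Fin k → Fin d → ℤ)
    (hv : LinearIndependent ℚ (fun i : Fin k => fun j : Fin d => (v i j : ℚ)))
    (φ : (Fin d → ℤ) →+ ℤ) (hφ : ∀ i, 0 < φ (v i)) :
    (∀ n : ℕ, {u : Fin d → ℤ | coneMem d k v u ∧ φ u = (n : ℤ)}.Finite) ∧
    (∀ p : Fin d → ℤ, parMem d k v p → 0 ≤ φ p) ∧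
    (PowerSeries.mk fun n : ℕ =>
        (({u : Fin d → ℤ | coneMem d k v u ∧ φ u = (n : ℤ)}.ncard : ℤ)))
      * ∏ i : Fin k, (1 - (PowerSeries.X : PowerSeries ℤ) ^ (φ (v i)).toNat)
      = ∑ᶠ p ∈ {u : Fin d → ℤ | parMem d k v u},
          (PowerSeries.X : PowerSeries ℤ) ^ (φ p).toNat := by
  classical
  refine ⟨cone_slice_finite d k v φ hφ, par_phi_nonneg d k v φ hφ, ?_⟩
  rw [main_identity d k v hv φ hφ, mul_assoc]
  have hone : (∏ i, geomSer ((φ (v i)).toNat))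
      * ∏ i : Fin k, (1 - (PowerSeries.X : PowerSeries ℤ) ^ (φ (v i)).toNat) = 1 := by
    rw [← Finset.prod_mul_distrib, Finset.prod_eq_one]
    intro i _
    rw [mul_comm]
    exact geom_mul _ (by have := hφ i; omega)
  rw [hone, mul_one, ← finsum_mem_coe_finset, Set.Finite.coe_toFinset]
end

section
/- Let E be a finite-dimensional real vector space, let C ⊆ E be a closed convex cone, let Q ⊆ E be the convex hull of a nonempty finite set (a polytope), and set P := Q + C (Minkowski sum). Assume P ⊆ C and 0 ∉ P. Let ρ ∈ E with ρ ≠ 0 be such that the ray R := {λ • ρ : λ ∈ ℝ, λ ≥ 0} is an exposed face of C and P ∩ R ≠ ∅. Then there exist a real number λ > 0 and an extreme point v of P such that ρ = λ • v. -/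
open scoped Pointwise

theorem stmt7 (E : Type*) [AddCommGroup E] [Module ℝ E]
    [TopologicalSpace E] [IsTopologicalAddGroup E] [ContinuousSMul ℝ E]
    [FiniteDimensional ℝ E]
    (C : Set E) (hCclosed : IsClosed C) (hCconv : Convex ℝ C)
    (hCcone : ∀ x ∈ C, ∀ r : ℝ, 0 ≤ r → r • x ∈ C)
    (s : Set E) (hsfin : s.Finite) (hsne : s.Nonempty)
    (P : Set E) (hP : P = convexHull ℝ s + C)
    (hPC : P ⊆ C) (h0 : (0 : E) ∉ P)
    (ρ : E) (hρ : ρ ≠ 0)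
    (R : Set E) (hR : R = {x : E | ∃ l : ℝ, 0 ≤ l ∧ x = l • ρ})
    (hexp : ∃ ℓ : E →L[ℝ] ℝ, R = {x ∈ C | ∀ y ∈ C, ℓ y ≤ ℓ x})
    (hPR : (P ∩ R).Nonempty) :
    ∃ lam : ℝ, 0 < lam ∧ ∃ v ∈ P.extremePoints ℝ, ρ = lam • v := by
  obtain ⟨ℓ, hℓ⟩ := hexp
  obtain ⟨p, hpP, hpR⟩ := hPR
  -- 0 ∈ C
  have h0C : (0 : E) ∈ C := by
    have := hCcone p (hPC hpP) 0 le_rfl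
    simpa using this
  -- ρ ∈ R
  have hρR : ρ ∈ R := by
    rw [hR]; exact ⟨1, zero_le_one, (one_smul ℝ ρ).symm⟩
  have hρC : ρ ∈ C := by rw [hℓ] at hρR; exact hρR.1
  have hmax : ∀ y ∈ C, ℓ y ≤ ℓ ρ := by rw [hℓ] at hρR; exact hρR.2
  -- 2ρ ∈ R
  have h2ρR : (2 : ℝ) • ρ ∈ R := by
    rw [hR]; exact ⟨2, by norm_num, rfl⟩
  have h2ρC : (2 : ℝ) • ρ ∈ C := by rw [hℓ] at h2ρR; exact h2ρR.1
  have hℓρ : ℓ ρ = 0 := by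
    have h1 : ℓ ((2 : ℝ) • ρ) ≤ ℓ ρ := hmax _ h2ρC
    have h2 : ℓ (0 : E) ≤ ℓ ρ := hmax _ h0C
    rw [map_smul] at h1
    rw [map_zero] at h2
    simp only [smul_eq_mul] at h1
    linarith
  have hle : ∀ y ∈ C, ℓ y ≤ 0 := fun y hy => (hmax y hy).trans_eq hℓρ
  -- characterize R-membership via ℓ = 0
  have hmemR : ∀ x ∈ C, ℓ x = 0 → ∃ l : ℝ, 0 ≤ l ∧ x = l • ρ := by
    intro x hxC hxℓ
    have : x ∈ R := by
      rw [hℓ]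
      exact ⟨hxC, fun y hy => (hle y hy).trans_eq hxℓ.symm⟩
    rw [hR] at this; exact this
  -- P is closed
  have hPclosed : IsClosed P := by
    rw [hP]
    exact hCclosed.add_left_of_isCompact (hsfin.isCompact_convexHull (𝕜 := ℝ))
  -- the set S of scales
  set S : Set ℝ := {l : ℝ | 0 ≤ l ∧ l • ρ ∈ P} with hS
  have hSclosed : IsClosed S := by
    have : S = Set.Ici (0 : ℝ) ∩ (fun l : ℝ => l • ρ) ⁻¹' P := rfl
    rw [this]
    exact isClosed_Ici.inter (hPclosed.preimage (by fun_prop))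
  obtain ⟨l0, hl00, hpl0⟩ : ∃ l : ℝ, 0 ≤ l ∧ p = l • ρ := by rw [hR] at hpR; exact hpR
  have hl0S : l0 ∈ S := ⟨hl00, hpl0 ▸ hpP⟩
  have hSne : S.Nonempty := ⟨l0, hl0S⟩
  have hSbdd : BddBelow S := ⟨0, fun l hl => hl.1⟩
  set lam0 := sInf S with hlam0
  have hlam0S : lam0 ∈ S := hSclosed.csInf_mem hSne hSbdd
  have hlam0pos : 0 < lam0 := by
    rcases lt_or_eq_of_le hlam0S.1 with h | h
    · exact h
    · exfalso; apply h0
      have := hlam0S.2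
      rw [← h, zero_smul] at this
      exact this
  set v := lam0 • ρ with hv
  have hvP : v ∈ P := hlam0S.2
  have hℓv : ℓ v = 0 := by rw [hv, map_smul, smul_eq_mul, hℓρ, mul_zero]
  refine ⟨lam0⁻¹, inv_pos.mpr hlam0pos, v, ?_, ?_⟩
  · rw [mem_extremePoints]
    refine ⟨hvP, fun x1 hx1 x2 hx2 hseg => ?_⟩
    obtain ⟨a, b, ha, hb, hab, habv⟩ := hseg
    have hℓ1 : ℓ x1 ≤ 0 := hle x1 (hPC hx1)
    have hℓ2 : ℓ x2 ≤ 0 := hle x2 (hPC hx2)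
    have hsum : a * ℓ x1 + b * ℓ x2 = 0 := by
      have := congrArg ℓ habv
      simpa [map_add, map_smul, hℓv] using this
    have hℓ10 : ℓ x1 = 0 := by nlinarith
    have hℓ20 : ℓ x2 = 0 := by nlinarith
    obtain ⟨l1, hl10, hx1e⟩ := hmemR x1 (hPC hx1) hℓ10
    obtain ⟨l2, hl20, hx2e⟩ := hmemR x2 (hPC hx2) hℓ20
    have hl1S : l1 ∈ S := ⟨hl10, hx1e ▸ hx1⟩
    have hl2S : l2 ∈ S := ⟨hl20, hx2e ▸ hx2⟩
    have hl1ge : lam0 ≤ l1 := csInf_le hSbdd hl1S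
    have hl2ge : lam0 ≤ l2 := csInf_le hSbdd hl2S
    have hcoef : a * l1 + b * l2 = lam0 := by
      have h : (a * l1 + b * l2 - lam0) • ρ = 0 := by
        have : (a * l1 + b * l2) • ρ = lam0 • ρ := by
          rw [add_smul, ← smul_smul, ← smul_smul, ← hx1e, ← hx2e]; exact habv
        rw [sub_smul, this, sub_self]
      rcases smul_eq_zero.mp h with h' | h'
      · linarith [sub_eq_zero.mp (by linarith [h'] : a * l1 + b * l2 - lam0 = 0)]
      · exact absurd h' hρ
    have hl1e : l1 = lam0 := by nlinarith
    have hl2e : l2 = lam0 := by nlinarith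
    constructor
    · rw [hx1e, hl1e]
    · rw [hx2e, hl2e]
  · rw [hv, smul_smul, inv_mul_cancel₀ (ne_of_gt hlam0pos), one_smul]
end

section
/- For each n ∈ ℕ, the set {(a, b, c) ∈ ℤ³ : c ≥ 1, b ≥ 0, 6a − b + 3c ≥ 0, 5a + 3c = n} is finite; let c_n denote its cardinality. Then in the formal power series ring ℤ[[t]] one has (Σ_{n ∈ ℕ} c_n tⁿ) · (1 − t)(1 − t⁵)² = t + 4t³ + 5t⁶ + 2t⁸. -/
open Finset PowerSeries

private def fcm (n : ℕ) : ℕ := if (2*n) % 5 = 0 then 5 else (2*n) % 5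

private def fK (n : ℕ) : ℕ := (2*n - fcm n) / 5

private def fval (n : ℕ) : ℤ :=
  if n = 0 then 0 else
    6*((n/5 : ℕ) : ℤ)^2 +
      (if n % 5 = 0 then -((n/5 : ℕ) : ℤ)
       else if n % 5 ≤ 2 then 5*((n/5 : ℕ) : ℤ)+1
       else 11*((n/5 : ℕ) : ℤ)+5)

private lemma fcm_spec (n : ℕ) : 1 ≤ fcm n ∧ fcm n ≤ 5 ∧ fcm n % 5 = (2*n) % 5 := by
  unfold fcm; split_ifs <;> omega

private lemma fK_spec (n : ℕ) (hn : 1 ≤ n) : 5 * fK n + fcm n = 2*n := by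
  have h := fcm_spec n
  unfold fK
  omega

private lemma fval_formula (n u r : ℕ) (h : n = 5*u+r) (hr : r < 5) (h0 : n ≠ 0) :
    fval n = 6*(u:ℤ)^2 + (if r = 0 then -(u:ℤ) else if r ≤ 2 then 5*(u:ℤ)+1 else 11*(u:ℤ)+5) := by
  unfold fval
  rw [if_neg h0, show n / 5 = u by omega, show n % 5 = r by omega]

private def gmap (n : ℕ) : (Σ _ : ℕ, ℕ) → ℤ × ℤ × ℤ :=
  fun q => (3*((fK n : ℤ) - q.1) - n, (q.2 : ℤ), (fcm n : ℤ) + 5*(q.1 : ℤ))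

private def Tfin (n : ℕ) : Finset (Σ _ : ℕ, ℕ) :=
  (range (fK n + 1)).sigma fun k => range (3*(fK n - k)+1)

private lemma set_eq (n : ℕ) (hn : 1 ≤ n) :
    {p : ℤ × ℤ × ℤ | 1 ≤ p.2.2 ∧ 0 ≤ p.2.1 ∧
        0 ≤ 6 * p.1 - p.2.1 + 3 * p.2.2 ∧ 5 * p.1 + 3 * p.2.2 = (n : ℤ)}
      = ↑((Tfin n).image (gmap n)) := by
  have hcm := fcm_spec n
  have hK := fK_spec n hn
  ext ⟨a, b, c⟩
  simp only [Set.mem_setOf_eq, coe_image, Set.mem_image, mem_coe, Tfin, mem_sigma,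
    mem_range, gmap, Prod.mk.injEq]
  constructor
  · rintro ⟨h1, h2, h3, h4⟩
    have hd : (5:ℤ) ∣ (c - (fcm n : ℤ)) := by omega
    obtain ⟨k, hk⟩ := hd
    have hk0 : 0 ≤ k := by omega
    refine ⟨⟨k.toNat, b.toNat⟩, ⟨?_, ?_⟩, ?_, ?_, ?_⟩ <;> (dsimp only; omega)
  · rintro ⟨⟨k, b'⟩, ⟨hk, hb'⟩, ha, hb, hc⟩
    dsimp only at hk hb' ha hb hc
    refine ⟨by omega, by omega, by omega, by omega⟩

private lemma set_empty :
    {p : ℤ × ℤ × ℤ | 1 ≤ p.2.2 ∧ 0 ≤ p.2.1 ∧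
        0 ≤ 6 * p.1 - p.2.1 + 3 * p.2.2 ∧ 5 * p.1 + 3 * p.2.2 = ((0:ℕ) : ℤ)} = ∅ := by
  ext ⟨a, b, c⟩
  simp only [Set.mem_setOf_eq, Set.mem_empty_iff_false, iff_false]
  push_cast
  omega

private lemma gmap_inj (n : ℕ) : Function.Injective (gmap n) := by
  rintro ⟨k, b⟩ ⟨k', b'⟩ h
  simp only [gmap, Prod.mk.injEq] at h
  obtain ⟨h1, h2, h3⟩ := h
  have : k = k' := by omega
  subst this
  have : b = b' := by omega
  subst this
  rfl

private lemma card_T (n : ℕ) (hn : 1 ≤ n) : ((Tfin n).card : ℤ) = fval n := by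
  have hcm := fcm_spec n
  have hK := fK_spec n hn
  set K := fK n with hKdef
  have hc : (Tfin n).card = 3 * (∑ j ∈ range (K+1), j) + (K + 1) := by
    rw [Tfin, card_sigma]
    simp only [card_range]
    rw [show (∑ k ∈ range (K+1), (3*(K-k)+1)) = ∑ k ∈ range (K+1), (3*((K+1)-1-k)+1) by
      apply Finset.sum_congr rfl; intro k hk; simp only [mem_range] at hk; omega]
    rw [Finset.sum_range_reflect (fun j => 3*j+1) (K+1)]
    rw [Finset.sum_add_distrib, ← Finset.mul_sum, Finset.sum_const, card_range, smul_eq_mul,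
      mul_one]
  have hG : (∑ j ∈ range (K+1), j) * 2 = (K+1) * K := by
    simpa using Finset.sum_range_id_mul_two (K+1)
  rw [hc]
  obtain ⟨u, r, hr5, hnur⟩ : ∃ u r, r < 5 ∧ n = 5*u + r := ⟨n/5, n%5, by omega, by omega⟩
  rw [fval_formula n u r hnur hr5 (by omega)]
  have hGz : ((∑ j ∈ range (K+1), j : ℕ) : ℤ) * 2 = ((K:ℤ)+1) * (K:ℤ) := by exact_mod_cast hG
  interval_cases r
  · have hKZ : (K:ℤ) = 2*(u:ℤ) - 1 := by omega
    rw [hKZ] at hGz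
    push_cast at hGz ⊢
    rw [hKZ]
    linarith [hGz]
  · have hKZ : (K:ℤ) = 2*(u:ℤ) := by omega
    rw [hKZ] at hGz
    push_cast at hGz ⊢
    rw [hKZ]
    linarith [hGz]
  · have hKZ : (K:ℤ) = 2*(u:ℤ) := by omega
    rw [hKZ] at hGz
    push_cast at hGz ⊢
    rw [hKZ]
    linarith [hGz]
  · have hKZ : (K:ℤ) = 2*(u:ℤ) + 1 := by omega
    rw [hKZ] at hGz
    push_cast at hGz ⊢
    rw [hKZ]
    linarith [hGz]
  · have hKZ : (K:ℤ) = 2*(u:ℤ) + 1 := by omega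
    rw [hKZ] at hGz
    push_cast at hGz ⊢
    rw [hKZ]
    linarith [hGz]

private lemma ncard_eq (n : ℕ) :
    (({p : ℤ × ℤ × ℤ | 1 ≤ p.2.2 ∧ 0 ≤ p.2.1 ∧
        0 ≤ 6 * p.1 - p.2.1 + 3 * p.2.2 ∧ 5 * p.1 + 3 * p.2.2 = (n : ℤ)}.ncard : ℤ)) = fval n := by
  rcases Nat.eq_zero_or_pos n with h0 | h1
  · subst h0; rw [set_empty]; simp [fval]
  · rw [set_eq n h1, Set.ncard_coe_finset, Finset.card_image_of_injective _ (gmap_inj n)]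
    exact card_T n h1

private lemma set_finite (n : ℕ) :
    {p : ℤ × ℤ × ℤ | 1 ≤ p.2.2 ∧ 0 ≤ p.2.1 ∧
        0 ≤ 6 * p.1 - p.2.1 + 3 * p.2.2 ∧ 5 * p.1 + 3 * p.2.2 = (n : ℤ)}.Finite := by
  rcases Nat.eq_zero_or_pos n with h0 | h1
  · subst h0; rw [set_empty]; exact Set.finite_empty
  · rw [set_eq n h1]; exact (Finset.finite_toSet _)

private lemma recurrence (m : ℕ) :
    fval m - (if 1 ≤ m then fval (m-1) else 0) - 2*(if 5 ≤ m then fval (m-5) else 0)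
      + 2*(if 6 ≤ m then fval (m-6) else 0) + (if 10 ≤ m then fval (m-10) else 0)
      - (if 11 ≤ m then fval (m-11) else 0)
    = (if m = 1 then 1 else 0) + 4*(if m = 3 then 1 else 0) + 5*(if m = 6 then 1 else 0)
      + 2*(if m = 8 then 1 else 0) := by
  rcases le_or_gt m 15 with hm | hm
  · interval_cases m <;> simp [fval]
  · obtain ⟨w, r, hr5, hmw⟩ : ∃ w r, r < 5 ∧ m = 5*w + 15 + r :=
      ⟨(m-15)/5, m%5, by omega, by omega⟩
    rw [if_pos (by omega), if_pos (by omega), if_pos (by omega), if_pos (by omega),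
      if_pos (by omega), if_neg (by omega), if_neg (by omega), if_neg (by omega),
      if_neg (by omega)]
    interval_cases r
    · rw [fval_formula m (w+3) 0 (by omega) (by omega) (by omega),
        fval_formula (m-1) (w+2) 4 (by omega) (by omega) (by omega),
        fval_formula (m-5) (w+2) 0 (by omega) (by omega) (by omega),
        fval_formula (m-6) (w+1) 4 (by omega) (by omega) (by omega),
        fval_formula (m-10) (w+1) 0 (by omega) (by omega) (by omega),
        fval_formula (m-11) w 4 (by omega) (by omega) (by omega)]
      norm_num
      try push_cast
      try ring
    · rw [fval_formula m (w+3) 1 (by omega) (by omega) (by omega),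
        fval_formula (m-1) (w+3) 0 (by omega) (by omega) (by omega),
        fval_formula (m-5) (w+2) 1 (by omega) (by omega) (by omega),
        fval_formula (m-6) (w+2) 0 (by omega) (by omega) (by omega),
        fval_formula (m-10) (w+1) 1 (by omega) (by omega) (by omega),
        fval_formula (m-11) (w+1) 0 (by omega) (by omega) (by omega)]
      norm_num
      try push_cast
      try ring
    · rw [fval_formula m (w+3) 2 (by omega) (by omega) (by omega),
        fval_formula (m-1) (w+3) 1 (by omega) (by omega) (by omega),
        fval_formula (m-5) (w+2) 2 (by omega) (by omega) (by omega),
        fval_formula (m-6) (w+2) 1 (by omega) (by omega) (by omega),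
        fval_formula (m-10) (w+1) 2 (by omega) (by omega) (by omega),
        fval_formula (m-11) (w+1) 1 (by omega) (by omega) (by omega)]
      norm_num
      try push_cast
      try ring
    · rw [fval_formula m (w+3) 3 (by omega) (by omega) (by omega),
        fval_formula (m-1) (w+3) 2 (by omega) (by omega) (by omega),
        fval_formula (m-5) (w+2) 3 (by omega) (by omega) (by omega),
        fval_formula (m-6) (w+2) 2 (by omega) (by omega) (by omega),
        fval_formula (m-10) (w+1) 3 (by omega) (by omega) (by omega),
        fval_formula (m-11) (w+1) 2 (by omega) (by omega) (by omega)]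
      norm_num
      try push_cast
      try ring
    · rw [fval_formula m (w+3) 4 (by omega) (by omega) (by omega),
        fval_formula (m-1) (w+3) 3 (by omega) (by omega) (by omega),
        fval_formula (m-5) (w+2) 4 (by omega) (by omega) (by omega),
        fval_formula (m-6) (w+2) 3 (by omega) (by omega) (by omega),
        fval_formula (m-10) (w+1) 4 (by omega) (by omega) (by omega),
        fval_formula (m-11) (w+1) 3 (by omega) (by omega) (by omega)]
      norm_num
      try push_cast
      try ring

theorem stmt12 :
    (∀ n : ℕ, {p : ℤ × ℤ × ℤ | 1 ≤ p.2.2 ∧ 0 ≤ p.2.1 ∧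
        0 ≤ 6 * p.1 - p.2.1 + 3 * p.2.2 ∧ 5 * p.1 + 3 * p.2.2 = (n : ℤ)}.Finite) ∧
    (PowerSeries.mk fun n : ℕ =>
        (({p : ℤ × ℤ × ℤ | 1 ≤ p.2.2 ∧ 0 ≤ p.2.1 ∧
            0 ≤ 6 * p.1 - p.2.1 + 3 * p.2.2 ∧
            5 * p.1 + 3 * p.2.2 = (n : ℤ)}.ncard : ℤ)))
      * ((1 - (PowerSeries.X : PowerSeries ℤ))
          * (1 - (PowerSeries.X : PowerSeries ℤ) ^ 5) ^ 2)
      = (PowerSeries.X : PowerSeries ℤ) + 4 * (PowerSeries.X : PowerSeries ℤ) ^ 3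
        + 5 * (PowerSeries.X : PowerSeries ℤ) ^ 6
        + 2 * (PowerSeries.X : PowerSeries ℤ) ^ 8 := by
  constructor
  · exact set_finite
  · have hmk : (PowerSeries.mk fun n : ℕ =>
        (({p : ℤ × ℤ × ℤ | 1 ≤ p.2.2 ∧ 0 ≤ p.2.1 ∧
            0 ≤ 6 * p.1 - p.2.1 + 3 * p.2.2 ∧
            5 * p.1 + 3 * p.2.2 = (n : ℤ)}.ncard : ℤ))) = PowerSeries.mk fval := by
      ext n
      simp only [coeff_mk]
      exact ncard_eq n
    rw [hmk]
    have expand : (PowerSeries.mk fval) * ((1 - (X:ℤ⟦X⟧)) * (1 - X^5)^2)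
        = PowerSeries.mk fval - PowerSeries.mk fval * X^1
          - C (2:ℤ) * (PowerSeries.mk fval * X^5) + C (2:ℤ) * (PowerSeries.mk fval * X^6)
          + PowerSeries.mk fval * X^10 - PowerSeries.mk fval * X^11 := by
      have h2 : (C (2:ℤ) : ℤ⟦X⟧) = 2 := by simp [map_ofNat]
      rw [h2]; ring
    rw [expand]
    have hrhs : ((X:ℤ⟦X⟧) + 4*X^3 + 5*X^6 + 2*X^8)
        = X + C (4:ℤ) * X^3 + C (5:ℤ) * X^6 + C (2:ℤ) * X^8 := by
      simp [map_ofNat]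
    rw [hrhs]
    ext m
    simp only [map_sub, map_add, coeff_C_mul, coeff_mul_X_pow', coeff_mk, coeff_X, coeff_X_pow,
      PowerSeries.coeff_C]
    have e3 : (if 3 ≤ m then (if m - 3 = 0 then (4:ℤ) else 0) else 0)
        = 4 * (if m = 3 then 1 else 0) := by split_ifs <;> omega
    have e6 : (if 6 ≤ m then (if m - 6 = 0 then (5:ℤ) else 0) else 0)
        = 5 * (if m = 6 then 1 else 0) := by split_ifs <;> omega
    have e8 : (if 8 ≤ m then (if m - 8 = 0 then (2:ℤ) else 0) else 0)
        = 2 * (if m = 8 then 1 else 0) := by split_ifs <;> omega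
    rw [e3, e6, e8]
    exact recurrence m
end
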